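/- Let H : ℂ² → ℂ³ be a holomorphic polynomial map, homogeneous of degree 2, mapping the unit sphere S³ to the unit sphere S⁵, and let X : ℂ² → ℂ³ be holomorphic with homogeneous expansion X = Σ_{k≥0} Xᵏ (Xᵏ homogeneous of degree k). If Re⟨X(z,w), H(z,w)⟩ = 0 for all (z,w) ∈ S³, then for every m ≥ 3 the component X^{m+2} satisfies ⟨X^{m+2}(z,w), H(z,w)⟩ = 0 identically on ℂ², and hence X^{m+2} is orthogonal to H at every point; in particular, if additionally ⟨·, H⟩ is injective on holomorphic homogeneous pieces (as for H(z,w) = (z², √2 zw, w²)), then Xᵏ = 0 for all k ≥ 5. -/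

import Mathlib

open ComplexConjugate Complex Real

noncomputable def EE (r : ℤ) (θ : ℝ) : ℂ := Complex.exp (r * θ * Complex.I)

lemma EE_mul (r s : ℤ) (θ : ℝ) : EE r θ * EE s θ = EE (r + s) θ := by
  rw [EE, EE, EE, ← Complex.exp_add]
  congr 1; push_cast; ring

lemma conj_EE (r : ℤ) (θ : ℝ) : conj (EE r θ) = EE (-r) θ := by
  rw [EE, EE, ← Complex.exp_conj]
  congr 1
  simp [Complex.conj_I]

lemma norm_EE (r : ℤ) (θ : ℝ) : ‖EE r θ‖ = 1 := by
  rw [EE]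
  have : (r : ℂ) * (θ : ℝ) * Complex.I = ((r * θ : ℝ) : ℂ) * Complex.I := by push_cast; ring
  rw [this, Complex.norm_exp_ofReal_mul_I]

lemma intEE (r : ℤ) : (∫ θ in (0:ℝ)..(2*Real.pi), EE r θ)
    = if r = 0 then (2*Real.pi : ℂ) else 0 := by
  rcases eq_or_ne r 0 with h | h
  · simp [h, EE]
  · rw [if_neg h]
    have : ∀ θ : ℝ, EE r θ = Complex.exp ((r * Complex.I) * θ) := by
      intro θ; rw [EE]; ring_nf
    simp_rw [this]
    rw [integral_exp_mul_complex (by simp [h, Complex.I_ne_zero])]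
    have h1 : (r : ℂ) * Complex.I * (2 * Real.pi : ℝ) = r * (2 * Real.pi * Complex.I) := by
      push_cast; ring
    rw [h1, Complex.exp_int_mul_two_pi_mul_I]
    simp

lemma swapSum (b : ℕ → ℂ) (hb : Summable fun k => ‖b k‖) (c : ℕ → ℤ) :
    HasSum (fun k => ∫ θ in (0:ℝ)..(2*Real.pi), b k * EE (c k) θ)
      (∫ θ in (0:ℝ)..(2*Real.pi), ∑' k, b k * EE (c k) θ) := by
  have hcont : ∀ k, Continuous fun θ : ℝ => b k * EE (c k) θ := by
    intro k
    simp only [EE]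
    exact continuous_const.mul (Complex.continuous_exp.comp (by continuity))
  have := intervalIntegral.hasSum_intervalIntegral_of_summable_norm (a := (0:ℝ))
    (b := 2*Real.pi) (f := fun k => ⟨_, hcont k⟩) ?_
  · exact this
  · apply Summable.of_nonneg_of_le (fun _ => norm_nonneg _) _ hb
    intro k
    rw [ContinuousMap.norm_le _ (norm_nonneg _)]
    intro x
    simp only [ContinuousMap.restrict_apply, ContinuousMap.coe_mk, norm_mul, norm_EE, mul_one,
      le_refl]

lemma coeffZero (a : ℕ → ℂ) (hb : Summable fun k => ‖a k‖)
    (hcond : ∀ θ : ℝ, (∑' k, a k * EE ((k : ℤ) - 2) θ) +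
      conj (∑' k, a k * EE ((k : ℤ) - 2) θ) = 0)
    (n : ℕ) (hn : 5 ≤ n) : a n = 0 := by
  have key : ∀ θ : ℝ, (∑' k, a k * EE ((k : ℤ) - n) θ)
      = - ∑' k, conj (a k) * EE (4 - (n:ℤ) - k) θ := by
    intro θ
    have hS := hcond θ
    have h1 : (∑' k, a k * EE ((k : ℤ) - n) θ)
        = EE (2 - n) θ * ∑' k, a k * EE ((k:ℤ) - 2) θ := by
      rw [← tsum_mul_left]
      congr 1; funext k
      rw [mul_left_comm, EE_mul]
      congr 2
      ring
    have hconjS : conj (∑' k, a k * EE ((k:ℤ) - 2) θ)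
        = ∑' k, conj (a k) * EE (2 - (k:ℤ)) θ := by
      rw [Complex.conj_tsum]
      congr 1; funext k
      rw [map_mul, conj_EE]
      congr 2
      ring
    have h2 : (∑' k, conj (a k) * EE (4 - (n:ℤ) - k) θ)
        = EE (2 - n) θ * ∑' k, conj (a k) * EE (2 - (k:ℤ)) θ := by
      rw [← tsum_mul_left]
      congr 1; funext k
      rw [mul_left_comm, EE_mul]
      congr 2
      ring
    rw [h1, h2, ← hconjS, ← mul_neg]
    congr 1
    linear_combination hS
  have hbconj : Summable fun k => ‖conj (a k)‖ := by simpa using hb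
  have hA := swapSum a hb (fun k => (k : ℤ) - n)
  have hB := swapSum (fun k => conj (a k)) hbconj (fun k => 4 - (n:ℤ) - k)
  have hAval : HasSum (fun k => ∫ θ in (0:ℝ)..(2*Real.pi), a k * EE ((k:ℤ) - n) θ)
      ((2*Real.pi : ℂ) * a n) := by
    have he : ∀ k : ℕ, (∫ θ in (0:ℝ)..(2*Real.pi), a k * EE ((k:ℤ) - n) θ)
        = if k = n then (2*Real.pi : ℂ) * a n else 0 := by
      intro k
      rw [intervalIntegral.integral_const_mul, intEE]
      rcases eq_or_ne k n with rfl | hk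
      · simp [mul_comm]
      · rw [if_neg (by omega), if_neg hk, mul_zero]
    simp_rw [he]
    exact hasSum_ite_eq n _
  have hBval : HasSum (fun k => ∫ θ in (0:ℝ)..(2*Real.pi), conj (a k) * EE (4 - (n:ℤ) - k) θ)
      (0 : ℂ) := by
    have he : ∀ k : ℕ, (∫ θ in (0:ℝ)..(2*Real.pi), conj (a k) * EE (4 - (n:ℤ) - k) θ)
        = 0 := by
      intro k
      rw [intervalIntegral.integral_const_mul, intEE, if_neg (by omega), mul_zero]
    simp_rw [he]
    exact hasSum_zero
  have hIA := hA.unique hAval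
  have hIB := hB.unique hBval
  have hz : (2*Real.pi : ℂ) * a n = -0 := by
    rw [← hIA, ← hIB, ← intervalIntegral.integral_neg]
    exact intervalIntegral.integral_congr fun θ _ => key θ
  rw [neg_zero] at hz
  have h2pi : (2*Real.pi : ℂ) ≠ 0 := by
    simp [Real.pi_ne_zero]
  exact (mul_eq_zero.mp hz).resolve_left h2pi

/-- Fourier-coefficient argument for homogeneous expansions: if `H : ℂ² → ℂ³`
is a holomorphic homogeneous polynomial map of degree `2` sending `S³` into
`S⁵`, and `X = Σ_k Xᵏ` is holomorphic with homogeneous pieces `Xᵏ` of degree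
`k` and `Re⟨X, H⟩ = 0` on `S³`, then `⟨X^{m+2}, H⟩ ≡ 0` on `ℂ²` for every
`m ≥ 3`; and if moreover pairing with `H` is injective on holomorphic
homogeneous pieces, then `Xᵏ = 0` for all `k ≥ 5`. -/
theorem stmt_19 (H : ℂ → ℂ → Fin 3 → ℂ)
    (hHdiff : Differentiable ℂ fun p : ℂ × ℂ => H p.1 p.2)
    (hHhom : ∀ (lam z w : ℂ), H (lam * z) (lam * w) = lam ^ 2 • H z w)
    (hHsph : ∀ z w : ℂ, ‖z‖ ^ 2 + ‖w‖ ^ 2 = 1 →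
      ∑ j, ‖H z w j‖ ^ 2 = 1)
    (X : ℂ → ℂ → Fin 3 → ℂ) (Xc : ℕ → ℂ → ℂ → Fin 3 → ℂ)
    (hXcdiff : ∀ k, Differentiable ℂ fun p : ℂ × ℂ => Xc k p.1 p.2)
    (hXchom : ∀ (k : ℕ) (lam z w : ℂ), Xc k (lam * z) (lam * w) = lam ^ k • Xc k z w)
    (hXsum : ∀ z w : ℂ, HasSum (fun k => Xc k z w) (X z w))
    (hinf : ∀ z w : ℂ, ‖z‖ ^ 2 + ‖w‖ ^ 2 = 1 →
      (∑ j, X z w j * conj (H z w j)).re = 0) :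
    (∀ m : ℕ, 3 ≤ m → ∀ z w : ℂ, ∑ j, Xc (m + 2) z w j * conj (H z w j) = 0) ∧
    ((∀ (k : ℕ) (Y : ℂ → ℂ → Fin 3 → ℂ),
        (Differentiable ℂ fun p : ℂ × ℂ => Y p.1 p.2) →
        (∀ lam z w : ℂ, Y (lam * z) (lam * w) = lam ^ k • Y z w) →
        (∀ z w : ℂ, ∑ j, Y z w j * conj (H z w j) = 0) →
        ∀ z w : ℂ, Y z w = 0) →
      ∀ k : ℕ, 5 ≤ k → ∀ z w : ℂ, Xc k z w = 0) := by
  classical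
  -- HasSum of the paired series at scaled points
  have hP : ∀ (z w μ : ℂ), HasSum (fun k => μ ^ k * ∑ j, Xc k z w j * conj (H z w j))
      (∑ j, X (μ*z) (μ*w) j * conj (H z w j)) := by
    intro z w μ
    have h0 := hXsum (μ*z) (μ*w)
    have hj : ∀ j, HasSum (fun k => Xc k (μ*z) (μ*w) j * conj (H z w j))
        (X (μ*z) (μ*w) j * conj (H z w j)) := by
      intro j
      exact (Pi.hasSum.mp h0 j).mul_right _
    have hsum := hasSum_sum (s := (Finset.univ : Finset (Fin 3)))
      (fun j _ => hj j)
    convert hsum using 1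
    funext k
    rw [Finset.mul_sum]
    refine Finset.sum_congr rfl fun j _ => ?_
    rw [hXchom, Pi.smul_apply, smul_eq_mul, mul_assoc]
  -- the paired sum vanishes on the sphere for degrees ≥ 5
  have key1 : ∀ n : ℕ, 5 ≤ n → ∀ z w : ℂ, ‖z‖ ^ 2 + ‖w‖ ^ 2 = 1 →
      (∑ j, Xc n z w j * conj (H z w j)) = 0 := by
    intro n hn z w hzw
    set a : ℕ → ℂ := fun k => ∑ j, Xc k z w j * conj (H z w j) with ha
    refine coeffZero a ?_ ?_ n hn
    · have hsummable := (hP z w 1).summable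
      simp only [one_pow, one_mul] at hsummable
      exact summable_norm_iff.mpr hsummable
    · intro θ
      set μ := Complex.exp (θ * Complex.I) with hμdef
      have hμ : ‖μ‖ = 1 := Complex.norm_exp_ofReal_mul_I θ
      have hsph : ‖μ*z‖ ^ 2 + ‖μ*w‖ ^ 2 = 1 := by
        rw [norm_mul, norm_mul, hμ, one_mul, one_mul]; exact hzw
      have h2 := hinf (μ*z) (μ*w) hsph
      have hsum2 : (∑ j, X (μ*z) (μ*w) j * conj (H (μ*z) (μ*w) j))
          = conj μ ^ 2 * ∑ j, X (μ*z) (μ*w) j * conj (H z w j) := by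
        rw [Finset.mul_sum]
        refine Finset.sum_congr rfl fun j _ => ?_
        rw [hHhom, Pi.smul_apply, smul_eq_mul, map_mul, map_pow]
        ring
      -- identify the tsum
      have hμ1 : μ = EE 1 θ := by rw [EE, hμdef]; norm_num
      have hμk : ∀ k : ℕ, μ ^ k = EE (k : ℤ) θ := by
        intro k
        rw [hμdef, ← Complex.exp_nat_mul, EE]
        congr 1; push_cast; ring
      have hμc : conj μ ^ 2 = EE (-2) θ := by
        rw [hμdef, ← Complex.exp_conj]
        have : conj ((θ:ℂ) * Complex.I) = (((-1 : ℤ) : ℂ)) * θ * Complex.I := by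
          simp [Complex.conj_I]
        rw [this]
        show EE (-1) θ ^ 2 = EE (-2) θ
        rw [sq, EE_mul]; norm_num
      have hrow : HasSum (fun k => a k * EE ((k:ℤ) - 2) θ)
          (conj μ ^ 2 * ∑ j, X (μ*z) (μ*w) j * conj (H z w j)) := by
        have h3 := (hP z w μ).mul_left (conj μ ^ 2)
        have e : (fun k => a k * EE ((k:ℤ) - 2) θ) = fun i => conj μ ^ 2 * (μ ^ i * a i) := by
          funext k
          rw [hμc, hμk, ← mul_assoc, mul_comm (EE (-2) θ) _, EE_mul, mul_comm (a k) _,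
            sub_eq_add_neg]
        rw [e]; exact h3
      rw [hrow.tsum_eq, ← hsum2, Complex.add_conj, h2]
      norm_num
  -- extend from the sphere to all of ℂ² by homogeneity
  have part1 : ∀ m : ℕ, 3 ≤ m → ∀ z w : ℂ, ∑ j, Xc (m + 2) z w j * conj (H z w j) = 0 := by
    intro m hm z w
    have hn : 5 ≤ m + 2 := by omega
    rcases eq_or_ne (‖z‖ ^ 2 + ‖w‖ ^ 2) 0 with h0 | h0
    · have hz : z = 0 := by
        have h1 := norm_nonneg z
        have h2 := norm_nonneg w
        have : ‖z‖ = 0 := by nlinarith [sq_nonneg ‖z‖, sq_nonneg ‖w‖]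
        exact norm_eq_zero.mp this
      have hw : w = 0 := by
        have : ‖w‖ = 0 := by nlinarith [sq_nonneg ‖z‖, sq_nonneg ‖w‖]
        exact norm_eq_zero.mp this
      subst hz; subst hw
      have hXc0 : Xc (m+2) 0 0 = 0 := by
        have h3 := hXchom (m+2) 0 0 0
        rw [mul_zero, zero_pow (by omega : m + 2 ≠ 0), zero_smul] at h3
        exact h3
      simp [hXc0]
    · set s : ℝ := Real.sqrt (‖z‖ ^ 2 + ‖w‖ ^ 2) with hsdef
      have hpos : 0 ≤ ‖z‖ ^ 2 + ‖w‖ ^ 2 := by positivity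
      have hs : 0 < s := Real.sqrt_pos.mpr (lt_of_le_of_ne hpos (Ne.symm h0))
      have hs2 : s ^ 2 = ‖z‖ ^ 2 + ‖w‖ ^ 2 := Real.sq_sqrt hpos
      set u : ℂ := z / s with hudef
      set v : ℂ := w / s with hvdef
      have hsne : (s : ℂ) ≠ 0 := by exact_mod_cast hs.ne'
      have hz : z = (s:ℂ) * u := by rw [hudef]; field_simp
      have hw : w = (s:ℂ) * v := by rw [hvdef]; field_simp
      have habs : ‖u‖ ^ 2 + ‖v‖ ^ 2 = 1 := by
        rw [hudef, hvdef, norm_div, norm_div, Complex.norm_real, Real.norm_of_nonneg hs.le,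
          div_pow, div_pow, ← add_div, ← hs2]
        field_simp
      have h1 := key1 (m+2) hn u v habs
      rw [hz, hw, hXchom, hHhom]
      have : ∀ j : Fin 3, ((s:ℂ) ^ (m+2) • Xc (m+2) u v) j * conj (((s:ℂ) ^ 2 • H u v) j)
          = (s:ℂ) ^ (m + 4) * (Xc (m+2) u v j * conj (H u v j)) := by
        intro j
        rw [Pi.smul_apply, Pi.smul_apply, smul_eq_mul, smul_eq_mul, map_mul, map_pow]
        rw [Complex.conj_ofReal]
        ring
      rw [Finset.sum_congr rfl fun j _ => this j, ← Finset.mul_sum, h1, mul_zero]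
  refine ⟨part1, fun hinj k hk z w => ?_⟩
  have hm : 3 ≤ k - 2 := by omega
  have h1 := part1 (k - 2) hm
  rw [(by omega : k - 2 + 2 = k)] at h1
  exact hinj k (Xc k) (hXcdiff k) (hXchom k) h1 z w
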